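/- Let λ ∈ ℝ with λ ∉ 𝒩 and set μ_j := −j⁴π⁴ + λ j²π². Let (c_j)_{j≥1} be a square-summable sequence of complex numbers such that for every t > 0 the series ∑_{j≥1} c_j · j · e^{μ_j t} converges absolutely and equals 0. Then c_j = 0 for every positive integer j. -/

import Mathlib

open Real Filter Topology

/-- If λ ∉ 𝒩, μ_j := −j⁴π⁴ + λj²π², and (c_j) ∈ ℓ² is such that for every t > 0 the
series ∑_j c_j · j · e^{μ_j t} converges absolutely to 0, then all c_j vanish. -/
theorem stmt5 (lam : ℝ)
    (hlam : lam ∉ {x : ℝ | ∃ j k : ℕ+, j ≠ k ∧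
      x = (j : ℝ) ^ 2 * π ^ 2 + (k : ℝ) ^ 2 * π ^ 2})
    (c : ℕ+ → ℂ)
    (hc : Summable (fun j : ℕ+ => ‖c j‖ ^ 2))
    (hsum : ∀ t : ℝ, 0 < t →
      Summable (fun j : ℕ+ => ‖c j * (j : ℂ) *
        (Real.exp ((-(j : ℝ) ^ 4 * π ^ 4 + lam * (j : ℝ) ^ 2 * π ^ 2) * t) : ℂ)‖))
    (hzero : ∀ t : ℝ, 0 < t →
      (∑' j : ℕ+, c j * (j : ℂ) *
        (Real.exp ((-(j : ℝ) ^ 4 * π ^ 4 + lam * (j : ℝ) ^ 2 * π ^ 2) * t) : ℂ)) = 0) :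
    ∀ j : ℕ+, c j = 0 := by
  by_contra hcon
  push_neg at hcon
  obtain ⟨j₀, hj₀⟩ := hcon
  have hπ : (3 : ℝ) < π := Real.pi_gt_three
  set μ : ℕ+ → ℝ := fun j => -(j : ℝ) ^ 4 * π ^ 4 + lam * (j : ℝ) ^ 2 * π ^ 2 with hμdef
  -- a convenient norm computation
  have hnorm0 : ∀ (x : ℝ) (j : ℕ+),
      ‖c j * (j : ℂ) * (Real.exp x : ℂ)‖ = ‖c j‖ * (j : ℝ) * Real.exp x := by
    intro x j
    rw [norm_mul, norm_mul]
    have h1 : ((j : ℂ)) = ((j : ℕ) : ℂ) := by push_cast; ring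
    rw [h1, Complex.norm_natCast, Complex.norm_real, Real.norm_eq_abs,
      abs_of_nonneg (Real.exp_nonneg x)]
  -- distinctness of the μ's
  have hdist : ∀ j k : ℕ+, j ≠ k → μ j ≠ μ k := by
    intro j k hjk heq
    apply hlam
    refine ⟨j, k, hjk, ?_⟩
    have hjk' : (j : ℝ) ≠ (k : ℝ) := by
      intro h
      exact hjk (PNat.coe_injective (by exact_mod_cast h))
    have hj0 : (0 : ℝ) < (j : ℝ) := by exact_mod_cast j.pos
    have hk0 : (0 : ℝ) < (k : ℝ) := by exact_mod_cast k.pos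
    have ha : (j : ℝ) ^ 2 * π ^ 2 ≠ (k : ℝ) ^ 2 * π ^ 2 := by
      intro h
      apply hjk'
      have hsq : (j : ℝ) ^ 2 = (k : ℝ) ^ 2 := by
        have hπ2 : (0 : ℝ) < π ^ 2 := by positivity
        exact mul_right_cancel₀ (ne_of_gt hπ2) h
      nlinarith [sq_nonneg ((j : ℝ) - k), sq_nonneg ((j : ℝ) + k)]
    have heq' : -(j : ℝ) ^ 4 * π ^ 4 + lam * (j : ℝ) ^ 2 * π ^ 2 =
        -(k : ℝ) ^ 4 * π ^ 4 + lam * (k : ℝ) ^ 2 * π ^ 2 := heq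
    have key : (lam - ((j : ℝ) ^ 2 * π ^ 2 + (k : ℝ) ^ 2 * π ^ 2)) *
        ((j : ℝ) ^ 2 * π ^ 2 - (k : ℝ) ^ 2 * π ^ 2) = 0 := by linear_combination heq'
    rcases mul_eq_zero.1 key with h | h
    · linarith [sub_eq_zero.1 h]
    · exact absurd (sub_eq_zero.1 h) ha
  -- far-out indices have small μ
  have hbig : ∀ j : ℕ+, max (lam + 1) (|μ j₀| + 1) ≤ (j : ℝ) → μ j < μ j₀ := by
    intro j hj
    have h1 : lam + 1 ≤ (j : ℝ) := le_trans (le_max_left _ _) hj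
    have h2 : |μ j₀| + 1 ≤ (j : ℝ) := le_trans (le_max_right _ _) hj
    have h3 : (1 : ℝ) ≤ (j : ℝ) := by exact_mod_cast j.one_le
    have h4 : -|μ j₀| ≤ μ j₀ := neg_abs_le _
    have hπ2 : (9 : ℝ) ≤ π ^ 2 := by nlinarith
    have hj2 : (j : ℝ) ≤ (j : ℝ) ^ 2 := by nlinarith
    have ha1 : (j : ℝ) ≤ (j : ℝ) ^ 2 * π ^ 2 := by nlinarith
    have ha2 : lam + 1 ≤ (j : ℝ) ^ 2 * π ^ 2 := le_trans h1 ha1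
    have hprod : (0 : ℝ) ≤ ((j : ℝ) ^ 2 * π ^ 2) * ((j : ℝ) ^ 2 * π ^ 2 - lam - 1) := by
      apply mul_nonneg (by positivity); linarith
    have hjle : μ j ≤ -(j : ℝ) := by
      simp only [hμdef]
      nlinarith [hprod, ha1]
    have : μ j ≤ -(|μ j₀| + 1) := le_trans hjle (by linarith)
    linarith
  -- the set of relevant indices with large μ is finite
  obtain ⟨N, hN⟩ := exists_nat_ge (max (lam + 1) (|μ j₀| + 1))
  have hTfin : Set.Finite {j : ℕ+ | c j ≠ 0 ∧ μ j₀ ≤ μ j} := by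
    apply Set.Finite.subset
      (Set.Finite.preimage (Set.injOn_of_injective (f := fun j : ℕ+ => (j : ℕ))
        PNat.coe_injective) (Set.finite_Iio (N + 1)))
    intro j hj
    simp only [Set.mem_preimage, Set.mem_Iio]
    by_contra hge
    push_neg at hge
    have hNj : (N : ℝ) ≤ (j : ℝ) := by exact_mod_cast Nat.le_of_succ_le hge
    exact absurd hj.2 (not_le.2 (hbig j (le_trans hN hNj)))
  have hTne : ({j : ℕ+ | c j ≠ 0 ∧ μ j₀ ≤ μ j}).Nonempty := ⟨j₀, hj₀, le_refl _⟩
  obtain ⟨js, hjsT, hjsmax⟩ := Set.exists_max_image _ μ hTfin hTne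
  have hmax : ∀ j : ℕ+, c j ≠ 0 → μ j ≤ μ js := by
    intro j hj
    by_cases h : μ j₀ ≤ μ j
    · exact hjsmax j ⟨hj, h⟩
    · have := hjsmax j₀ ⟨hj₀, le_refl _⟩
      push_neg at h
      linarith
  -- Tannery's theorem setup
  set f : ℝ → ℕ+ → ℂ := fun t j => c j * (j : ℂ) * (Real.exp ((μ j - μ js) * t) : ℂ)
    with hfdef
  set g : ℕ+ → ℂ := fun j => if j = js then c js * (js : ℂ) else 0 with hgdef
  set bound : ℕ+ → ℝ := fun j => ‖c j‖ * (j : ℝ) * Real.exp (μ j - μ js) with hbdef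
  -- the bound is summable
  have h_sum : Summable bound := by
    have h1 : Summable (fun j : ℕ+ => ‖c j * (j : ℂ) * (Real.exp (μ j * 1) : ℂ)‖) :=
      hsum 1 one_pos
    apply (h1.mul_right (Real.exp (-μ js))).congr
    intro j
    rw [hnorm0]
    simp only [hbdef]
    rw [mul_assoc, mul_assoc, ← Real.exp_add]
    ring_nf
  -- pointwise convergence
  have hab : ∀ j : ℕ+, Tendsto (f · j) atTop (𝓝 (g j)) := by
    intro j
    by_cases hj : j = js
    · subst hj
      have : (f · j) = fun _ : ℝ => c j * (j : ℂ) := by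
        funext t
        simp [hfdef]
      rw [this]
      simp only [hgdef, if_pos rfl]
      exact tendsto_const_nhds
    · by_cases hcj : c j = 0
      · have : (f · j) = fun _ : ℝ => (0 : ℂ) := by
          funext t
          simp [hfdef, hcj]
        rw [this]
        simp only [hgdef, if_neg hj]
        exact tendsto_const_nhds
      · have hlt : μ j - μ js < 0 :=
          sub_neg.2 (lt_of_le_of_ne (hmax j hcj) (hdist j js hj))
        have h1 : Tendsto (fun t : ℝ => (μ j - μ js) * t) atTop atBot :=
          (tendsto_const_mul_atBot_of_neg hlt).2 tendsto_id
        have h2 : Tendsto (fun t : ℝ => Real.exp ((μ j - μ js) * t)) atTop (𝓝 0) :=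
          Real.tendsto_exp_atBot.comp h1
        have h3 : Tendsto (fun t : ℝ => (Real.exp ((μ j - μ js) * t) : ℂ)) atTop (𝓝 0) := by
          have := (Complex.continuous_ofReal.tendsto 0).comp h2
          simpa only [Function.comp_def, Complex.ofReal_zero] using this
        have h4 := h3.const_mul (c j * (j : ℂ))
        simp only [mul_zero] at h4
        simp only [hgdef, if_neg hj]
        exact h4
  -- the domination
  have h_bound : ∀ᶠ t in atTop, ∀ j : ℕ+, ‖f t j‖ ≤ bound j := by
    filter_upwards [eventually_ge_atTop (1 : ℝ)] with t ht
    intro j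
    simp only [hfdef, hbdef]
    rw [hnorm0]
    by_cases hcj : c j = 0
    · simp [hcj]
    · have hle : μ j - μ js ≤ 0 := sub_nonpos.2 (hmax j hcj)
      have hexp : (μ j - μ js) * t ≤ μ j - μ js := by nlinarith
      have hj0 : (0 : ℝ) ≤ (j : ℝ) := by positivity
      gcongr
  -- Tannery's theorem
  have H := tendsto_tsum_of_dominated_convergence h_sum hab h_bound
  have hgsum : (∑' j : ℕ+, g j) = c js * (js : ℂ) := by
    simp only [hgdef]
    exact tsum_ite_eq js (fun _ => c js * (js : ℂ))
  rw [hgsum] at H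
  -- but the sums are all zero
  have hzero' : ∀ t : ℝ, 0 < t → (∑' j : ℕ+, f t j) = 0 := by
    intro t ht
    have heq : (fun j : ℕ+ => f t j) =
        fun j : ℕ+ => (c j * (j : ℂ) * (Real.exp (μ j * t) : ℂ)) * (Real.exp (-μ js * t) : ℂ) := by
      funext j
      simp only [hfdef]
      rw [mul_assoc, mul_assoc, ← Complex.ofReal_mul, ← Real.exp_add]
      ring_nf
    rw [heq, tsum_mul_right]
    have h0 : (∑' j : ℕ+, c j * (j : ℂ) * (Real.exp (μ j * t) : ℂ)) = 0 := hzero t ht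
    rw [h0, zero_mul]
  have H0 : Tendsto (fun t : ℝ => ∑' j : ℕ+, f t j) atTop (𝓝 0) := by
    apply Tendsto.congr' _ (tendsto_const_nhds (x := (0 : ℂ)))
    filter_upwards [eventually_gt_atTop (0 : ℝ)] with t ht
    exact (hzero' t ht).symm
  have hfinal : c js * (js : ℂ) = 0 := tendsto_nhds_unique H H0
  have hjsne : ((js : ℂ)) ≠ 0 := by
    have : ((js : ℂ)) = ((js : ℕ) : ℂ) := by push_cast; ring
    rw [this]
    exact_mod_cast js.ne_zero
  exact hjsT.1 (by
    rcases mul_eq_zero.1 hfinal with h | h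
    · exact h
    · exact absurd h hjsne)
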